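/- Let X be a normed space satisfying the Opial condition, and let Σ = {x_n} be a sequence in X. Suppose w ∈ X is a weak accumulation point of Σ (i.e., some subsequence x_{n_k} converges weakly to w) and w ∈ Λ(Σ), where Λ(Σ) = {z ∈ X : lim_{n→∞} ‖x_n − z‖ exists}. Then for every z ∈ Λ(Σ) with z ≠ w, one has ψ_Σ(w) < ψ_Σ(z), where ψ_Σ(z) := lim_{n→∞} ‖x_n − z‖. In particular, w is the unique global minimizer of ψ_Σ on Λ(Σ). -/
import Mathlib


open Filter Topology

/-- In an Opial normed space, a weak accumulation point `w` of a
sequence `Σ` that belongs to `Λ(Σ)` is the strict minimizer of `ψ_Σ` on `Λ(Σ)`. -/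
theorem stmt_0 {X : Type*} [NormedAddCommGroup X] [NormedSpace ℝ X]
    (opial : ∀ (u : ℕ → X) (p : X),
      (∀ φ : X →L[ℝ] ℝ, Tendsto (fun n => φ (u n)) atTop (𝓝 (φ p))) →
      ∀ z, z ≠ p →
        Filter.liminf (fun n => ‖u n - p‖) atTop < Filter.liminf (fun n => ‖u n - z‖) atTop)
    (x : ℕ → X) (w : X)
    (nk : ℕ → ℕ) (hnk : StrictMono nk)
    (hweak : ∀ φ : X →L[ℝ] ℝ, Tendsto (fun k => φ (x (nk k))) atTop (𝓝 (φ w)))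
    (lw : ℝ) (hlw : Tendsto (fun n => ‖x n - w‖) atTop (𝓝 lw)) :
    ∀ z lz, z ≠ w → Tendsto (fun n => ‖x n - z‖) atTop (𝓝 lz) → lw < lz := by
  intro z lz hz hlz
  have h := opial (fun k => x (nk k)) w hweak z hz
  have hw' : Tendsto (fun k => ‖x (nk k) - w‖) atTop (𝓝 lw) :=
    hlw.comp hnk.tendsto_atTop
  have hz' : Tendsto (fun k => ‖x (nk k) - z‖) atTop (𝓝 lz) :=
    hlz.comp hnk.tendsto_atTop
  rwa [hw'.liminf_eq, hz'.liminf_eq] at h
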